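/- For any odd integer p and even integer q with 0 < |q| < p and gcd(p,q) = 1, the continued fraction expansion of p/q consisting of only nonzero even integers is unique. -/

import Mathlib

/-- Value of a continued fraction `[a₁, …, aₙ] = a₁ + 1/(a₂ + 1/(⋯ + 1/aₙ))`,
evaluated in `ℚ` (with the convention `cfVal [] = 0`, so `cfVal [a] = a`). -/
def cfVal : List ℤ → ℚ
  | [] => 0
  | a :: l => a + (cfVal l)⁻¹

lemma one_lt_abs_cfVal : ∀ {l : List ℤ}, (∀ a ∈ l, a ≠ 0 ∧ Even a) → l ≠ [] →
    1 < |cfVal l| := by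
  intro l
  induction l with
  | nil => intro _ hne; exact absurd rfl hne
  | cons a m ih =>
    intro h _
    obtain ⟨ha0, hae⟩ := h a List.mem_cons_self
    have h2 : (2 : ℤ) ≤ |a| := by
      obtain ⟨k, rfl⟩ := hae
      rcases abs_cases (k + k) with ⟨h', _⟩ | ⟨h', _⟩ <;> omega
    have h2q : (2 : ℚ) ≤ |(a : ℚ)| := by
      rw [← Int.cast_abs]; exact_mod_cast h2
    have hx : |(cfVal m)⁻¹| < 1 := by
      rcases eq_or_ne m [] with rfl | hm
      · simp [cfVal]
      · have h1 := ih (fun b hb => h b (List.mem_cons_of_mem a hb)) hm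
        rw [abs_inv]
        rw [inv_lt_one_iff₀]
        right; exact h1
    have key := abs_sub_abs_le_abs_sub (a : ℚ) (-(cfVal m)⁻¹)
    simp only [abs_neg, sub_neg_eq_add] at key
    show 1 < |(a : ℚ) + (cfVal m)⁻¹|
    linarith

lemma abs_inv_cfVal_lt_one {l : List ℤ} (h : ∀ a ∈ l, a ≠ 0 ∧ Even a) :
    |(cfVal l)⁻¹| < 1 := by
  rcases eq_or_ne l [] with rfl | hm
  · simp [cfVal]
  · rw [abs_inv, inv_lt_one_iff₀]
    right; exact one_lt_abs_cfVal h hm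

lemma cfVal_inj : ∀ (l₁ l₂ : List ℤ), (∀ a ∈ l₁, a ≠ 0 ∧ Even a) →
    (∀ a ∈ l₂, a ≠ 0 ∧ Even a) → cfVal l₁ = cfVal l₂ → l₁ = l₂ := by
  intro l₁
  induction l₁ with
  | nil =>
    intro l₂ _ h₂ hv
    rcases l₂ with _ | ⟨b, m₂⟩
    · rfl
    · have := one_lt_abs_cfVal h₂ (by simp)
      rw [← hv] at this
      simp [cfVal] at this; linarith
  | cons a m₁ ih =>
    intro l₂ h₁ h₂ hv
    rcases l₂ with _ | ⟨b, m₂⟩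
    · have := one_lt_abs_cfVal h₁ (by simp)
      rw [hv] at this
      simp [cfVal] at this; linarith
    · have hm₁ : ∀ c ∈ m₁, c ≠ 0 ∧ Even c := fun c hc => h₁ c (List.mem_cons_of_mem a hc)
      have hm₂ : ∀ c ∈ m₂, c ≠ 0 ∧ Even c := fun c hc => h₂ c (List.mem_cons_of_mem b hc)
      have heq : (a : ℚ) + (cfVal m₁)⁻¹ = (b : ℚ) + (cfVal m₂)⁻¹ := hv
      have hx := abs_inv_cfVal_lt_one hm₁
      have hy := abs_inv_cfVal_lt_one hm₂
      have hab : a = b := by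
        have hd : ((a - b : ℤ) : ℚ) = (cfVal m₂)⁻¹ - (cfVal m₁)⁻¹ := by
          push_cast; linarith
        have h2 : |((a - b : ℤ) : ℚ)| < 2 := by
          rw [hd]
          calc |(cfVal m₂)⁻¹ - (cfVal m₁)⁻¹| ≤ |(cfVal m₂)⁻¹| + |(cfVal m₁)⁻¹| :=
                abs_sub _ _
            _ < 2 := by linarith
        have h2' : |a - b| < 2 := by
          rw [← Int.cast_abs] at h2; exact_mod_cast h2
        have hea : Even a := (h₁ a List.mem_cons_self).2
        have heb : Even b := (h₂ b List.mem_cons_self).2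
        obtain ⟨j, hj⟩ := hea
        obtain ⟨k, hk⟩ := heb
        rcases abs_cases (a - b) with ⟨h', _⟩ | ⟨h', _⟩ <;> omega
      subst hab
      have htail : cfVal m₁ = cfVal m₂ := by
        have : (cfVal m₁)⁻¹ = (cfVal m₂)⁻¹ := by linarith
        exact inv_injective this
      rw [ih m₂ hm₁ hm₂ htail]

/-- Uniqueness of the even expansion. -/
theorem even_expansion_unique (p q : ℤ) (hp : Odd p) (hq : Even q)
    (h0 : 0 < |q|) (h1 : |q| < p) (hco : IsCoprime p q)
    (l₁ l₂ : List ℤ)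
    (h₁ : ∀ a ∈ l₁, a ≠ 0 ∧ Even a) (hv₁ : cfVal l₁ = (p : ℚ) / q)
    (h₂ : ∀ a ∈ l₂, a ≠ 0 ∧ Even a) (hv₂ : cfVal l₂ = (p : ℚ) / q) :
    l₁ = l₂ := by
  exact cfVal_inj l₁ l₂ h₁ h₂ (hv₁.trans hv₂.symm)
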